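/- For every ω ∈ ℝ and σ₀ > 0, the bandit (spike) density is a probability density: f^{ω,σ₀}(y) ≥ 0 for every y ∈ ℝ, and ∫_ℝ f^{ω,σ₀}(y) dy = 1; consequently B(ω,σ₀) is a probability measure on ℝ. Moreover, when ω = 0 and σ₀ = 1, f^{0,1}(y) = (1/√(2π))·exp(−y²/2) is the standard normal density. -/

import Mathlib

open MeasureTheory ProbabilityTheory Filter

/-- Standard normal cumulative distribution function Φ. -/
noncomputable def stdNormalCDF (x : ℝ) : ℝ :=
  ∫ t in Set.Iic x, (1 / Real.sqrt (2 * Real.pi)) * Real.exp (-(t ^ 2) / 2)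

/-- The bandit (spike) density `f^{ω,σ₀}`. -/
noncomputable def spikeDensity (w s0 y : ℝ) : ℝ :=
  (1 / (Real.sqrt (2 * Real.pi) * s0)) * Real.exp (-(|y| - w) ^ 2 / (2 * s0 ^ 2))
    - (w / s0 ^ 2) * Real.exp (2 * w * |y| / s0 ^ 2) * stdNormalCDF (-(|y| + w) / s0)

section Aux
open Set Real Topology

noncomputable def snPDF (t : ℝ) : ℝ := (1 / Real.sqrt (2 * Real.pi)) * Real.exp (-(t ^ 2) / 2)

lemma snPDF_nonneg (t : ℝ) : 0 ≤ snPDF t := by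
  unfold snPDF; positivity

lemma snPDF_integrable : Integrable snPDF := by
  have h := (integrable_exp_neg_mul_sq (by norm_num : (0:ℝ) < 1/2)).const_mul
      (1 / Real.sqrt (2 * Real.pi))
  refine h.congr (Filter.Eventually.of_forall fun t => ?_)
  unfold snPDF; ring_nf

lemma snPDF_integral : ∫ t, snPDF t = 1 := by
  unfold snPDF
  rw [show (fun t : ℝ => 1 / Real.sqrt (2 * Real.pi) * Real.exp (-(t ^ 2) / 2))
      = fun t : ℝ => 1 / Real.sqrt (2 * Real.pi) * Real.exp (-(1/2) * t ^ 2) by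
    funext t; ring_nf]
  rw [integral_const_mul, integral_gaussian]
  rw [show Real.pi / (1/2) = 2 * Real.pi by ring]
  rw [one_div_mul_cancel]
  positivity

lemma stdNormalCDF_nonneg (x : ℝ) : 0 ≤ stdNormalCDF x :=
  integral_nonneg fun t => snPDF_nonneg t

lemma hasDerivAt_stdNormalCDF (x : ℝ) : HasDerivAt stdNormalCDF (snPDF x) x := by
  have heq : stdNormalCDF = fun y => (∫ t in (0:ℝ)..y, snPDF t) + stdNormalCDF 0 := by
    funext y
    rw [← intervalIntegral.integral_Iic_sub_Iic (snPDF_integrable.integrableOn)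
      (snPDF_integrable.integrableOn)]
    show (∫ t in Iic y, snPDF t) =
      (∫ t in Iic y, snPDF t) - (∫ t in Iic 0, snPDF t) + (∫ t in Iic 0, snPDF t)
    ring
  rw [heq]
  have : HasDerivAt (fun y => ∫ t in (0:ℝ)..y, snPDF t) (snPDF x) x := by
    refine intervalIntegral.integral_hasDerivAt_right
      snPDF_integrable.intervalIntegrable
      snPDF_integrable.aestronglyMeasurable.stronglyMeasurableAtFilter ?_
    exact (continuous_const.mul (Real.continuous_exp.comp (by continuity))).continuousAt
  exact this.add_const _

lemma continuous_stdNormalCDF : Continuous stdNormalCDF :=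
  continuous_iff_continuousAt.2 fun x => (hasDerivAt_stdNormalCDF x).continuousAt

lemma tendsto_stdNormalCDF_atTop : Tendsto stdNormalCDF atTop (𝓝 1) := by
  have h := (MeasureTheory.aecover_Iic (tendsto_id : Tendsto (id : ℝ → ℝ) atTop atTop)
      : AECover (volume : Measure ℝ) atTop fun x : ℝ => Iic x)
  have := h.integral_tendsto_of_countably_generated snPDF_integrable
  rwa [snPDF_integral] at this


lemma hasDerivAt_gauss (x : ℝ) :
    HasDerivAt (fun u : ℝ => Real.exp (-(u ^ 2) / 2)) (-(x * Real.exp (-(x ^ 2) / 2))) x := by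
  have hinner : HasDerivAt (fun u : ℝ => -(u ^ 2) / 2) (-x) x := by
    have := ((hasDerivAt_pow 2 x).neg).div_const 2
    exact this.congr_deriv (by push_cast; ring)
  have := hinner.exp
  convert this using 1; ring

lemma tendsto_gauss_atTop : Tendsto (fun x : ℝ => Real.exp (-(x ^ 2) / 2)) atTop (𝓝 0) := by
  apply Real.tendsto_exp_atBot.comp
  apply tendsto_atBot_mono (fun x : ℝ => by nlinarith [sq_nonneg (x - 1)] : ∀ x : ℝ, -(x ^ 2) / 2 ≤ 1 - x)
  exact tendsto_atBot_add_const_left _ 1 tendsto_neg_atTop_atBot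

/-- Mills-type bound: `Φ(-t) ≤ φ(t)/t` for `t > 0`. -/
lemma mills (t : ℝ) (ht : 0 < t) : stdNormalCDF (-t) ≤ snPDF t / t := by
  have hderiv : ∀ x ∈ Ici t, HasDerivAt (fun u : ℝ => -(1 / t) * snPDF u)
      ((fun u => u / t * snPDF u) x) x := by
    intro x _
    have := (hasDerivAt_gauss x).const_mul (-(1 / t) * (1 / Real.sqrt (2 * Real.pi)))
    convert this using 1
    · rfl
    · rfl
    · funext u
      rw [show snPDF u = (1 / Real.sqrt (2 * Real.pi)) * Real.exp (-(u ^ 2) / 2) from rfl]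
      ring
    · show x / t * snPDF x = _
      rw [show snPDF x = (1 / Real.sqrt (2 * Real.pi)) * Real.exp (-(x ^ 2) / 2) from rfl]
      field_simp
  have hpos : ∀ x ∈ Ioi t, 0 ≤ x / t * snPDF x := fun x hx =>
    mul_nonneg (div_nonneg (le_of_lt (ht.trans hx)) ht.le) (snPDF_nonneg x)
  have hlim : Tendsto (fun u : ℝ => -(1 / t) * snPDF u) atTop (𝓝 0) := by
    have h0 : Tendsto snPDF atTop (𝓝 (1 / Real.sqrt (2 * Real.pi) * 0)) :=
      tendsto_gauss_atTop.const_mul _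
    rw [mul_zero] at h0
    have h1 := h0.const_mul (-(1 / t))
    rwa [mul_zero] at h1
  have hval := integral_Ioi_of_hasDerivAt_of_nonneg' hderiv hpos hlim
  have hintg : IntegrableOn (fun x => x / t * snPDF x) (Ioi t) :=
    integrableOn_Ioi_deriv_of_nonneg' hderiv hpos hlim
  have h1 : stdNormalCDF (-t) = ∫ x in Ioi t, snPDF x := by
    rw [show stdNormalCDF (-t) = ∫ x in Iic (-t), snPDF x from rfl,
      ← integral_comp_neg_Ioi]
    refine setIntegral_congr_fun measurableSet_Ioi fun x _ => ?_
    unfold snPDF; rw [neg_sq]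
  have h2 : (∫ x in Ioi t, snPDF x) ≤ ∫ x in Ioi t, x / t * snPDF x := by
    refine setIntegral_mono_on snPDF_integrable.integrableOn hintg measurableSet_Ioi
      fun x hx => ?_
    have hx1 : (1 : ℝ) ≤ x / t := (one_le_div ht).2 (le_of_lt hx)
    nlinarith [snPDF_nonneg x]
  rw [h1]
  refine h2.trans ?_
  rw [hval]
  apply le_of_eq
  field_simp
  ring

noncomputable def spikeAux (w s0 x : ℝ) : ℝ :=
  (1 / (Real.sqrt (2 * Real.pi) * s0)) * Real.exp (-(x - w) ^ 2 / (2 * s0 ^ 2))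
    - (w / s0 ^ 2) * Real.exp (2 * w * x / s0 ^ 2) * stdNormalCDF (-(x + w) / s0)

noncomputable def spikeF (w s0 x : ℝ) : ℝ :=
  stdNormalCDF ((x - w) / s0) - Real.exp (2 * w * x / s0 ^ 2) * stdNormalCDF (-(x + w) / s0)

lemma expA (w s0 x : ℝ) (hs0 : 0 < s0) :
    Real.exp (2 * w * x / s0 ^ 2) * Real.exp (-(((x + w) / s0) ^ 2) / 2)
      = Real.exp (-(x - w) ^ 2 / (2 * s0 ^ 2)) := by
  rw [← Real.exp_add]; congr 1; rw [div_pow]; ring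

lemma expB (w s0 x : ℝ) (hs0 : 0 < s0) :
    Real.exp (-(((x - w) / s0) ^ 2) / 2) = Real.exp (-(x - w) ^ 2 / (2 * s0 ^ 2)) := by
  congr 1; rw [div_pow]; ring

lemma expC (w s0 x : ℝ) :
    Real.exp (-((-(x + w) / s0) ^ 2) / 2) = Real.exp (-(((x + w) / s0) ^ 2) / 2) := by
  congr 1; ring

lemma hasDerivAt_spikeF (w s0 : ℝ) (hs0 : 0 < s0) (x : ℝ) :
    HasDerivAt (spikeF w s0) (2 * spikeAux w s0 x) x := by
  have d1 : HasDerivAt (fun x => stdNormalCDF ((x - w) / s0)) (snPDF ((x - w) / s0) * (1 / s0)) x :=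
    (hasDerivAt_stdNormalCDF _).comp x (((hasDerivAt_id x).sub_const w).div_const s0)
  have d2 : HasDerivAt (fun x => Real.exp (2 * w * x / s0 ^ 2))
      (Real.exp (2 * w * x / s0 ^ 2) * (2 * w * 1 / s0 ^ 2)) x :=
    (((hasDerivAt_id x).const_mul (2 * w)).div_const (s0 ^ 2)).exp
  have d3 : HasDerivAt (fun x => stdNormalCDF (-(x + w) / s0))
      (snPDF (-(x + w) / s0) * (-1 / s0)) x := by
    have hinner : HasDerivAt (fun x : ℝ => -(x + w) / s0) (-1 / s0) x :=
      (((hasDerivAt_id x).add_const w).neg).div_const s0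
    exact (hasDerivAt_stdNormalCDF _).comp x hinner
  have d := d1.sub (d2.mul d3)
  convert d using 1
  · rfl
  · rfl
  · rfl
  show 2 * spikeAux w s0 x = _
  unfold spikeAux
  rw [show snPDF ((x - w) / s0) = (1 / Real.sqrt (2 * Real.pi)) *
        Real.exp (-(((x - w) / s0) ^ 2) / 2) from rfl,
      show snPDF (-(x + w) / s0) = (1 / Real.sqrt (2 * Real.pi)) *
        Real.exp (-((-(x + w) / s0) ^ 2) / 2) from rfl,
      expC w s0 x, expB w s0 x hs0]
  linear_combination (-(1 / (Real.sqrt (2 * Real.pi) * s0))) * expA w s0 x hs0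

lemma spikeAux_nonneg (w s0 : ℝ) (hs0 : 0 < s0) (x : ℝ) (hx : 0 ≤ x) :
    0 ≤ spikeAux w s0 x := by
  unfold spikeAux
  rcases le_or_gt w 0 with hw | hw
  · have h1 : 0 ≤ (1 / (Real.sqrt (2 * Real.pi) * s0)) *
        Real.exp (-(x - w) ^ 2 / (2 * s0 ^ 2)) := by positivity
    have h2 : w / s0 ^ 2 ≤ 0 := div_nonpos_of_nonpos_of_nonneg hw (sq_nonneg s0)
    have h3 : 0 ≤ Real.exp (2 * w * x / s0 ^ 2) * stdNormalCDF (-(x + w) / s0) :=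
      mul_nonneg (Real.exp_nonneg _) (stdNormalCDF_nonneg _)
    nlinarith [mul_nonpos_of_nonpos_of_nonneg h2 h3]
  · have hxw : 0 < x + w := by linarith
    have htpos : 0 < (x + w) / s0 := div_pos hxw hs0
    have step1 : stdNormalCDF (-(x + w) / s0) ≤ snPDF ((x + w) / s0) / ((x + w) / s0) := by
      rw [neg_div]; exact mills _ htpos
    have key : (w / s0 ^ 2) * Real.exp (2 * w * x / s0 ^ 2) * stdNormalCDF (-(x + w) / s0)
        ≤ (1 / (Real.sqrt (2 * Real.pi) * s0)) * Real.exp (-(x - w) ^ 2 / (2 * s0 ^ 2)) := by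
      have c1 : (w / s0 ^ 2) * Real.exp (2 * w * x / s0 ^ 2) * stdNormalCDF (-(x + w) / s0)
          ≤ (w / s0 ^ 2) * Real.exp (2 * w * x / s0 ^ 2) *
            (snPDF ((x + w) / s0) / ((x + w) / s0)) :=
        mul_le_mul_of_nonneg_left step1 (by positivity)
      have c2 : (w / s0 ^ 2) * Real.exp (2 * w * x / s0 ^ 2) *
            (snPDF ((x + w) / s0) / ((x + w) / s0))
          = (w / (x + w)) * ((1 / (Real.sqrt (2 * Real.pi) * s0)) *
            (Real.exp (2 * w * x / s0 ^ 2) * Real.exp (-(((x + w) / s0) ^ 2) / 2))) := by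
        rw [show snPDF ((x + w) / s0) = (1 / Real.sqrt (2 * Real.pi)) *
          Real.exp (-(((x + w) / s0) ^ 2) / 2) from rfl]
        have h2pi : Real.sqrt (2 * Real.pi) ≠ 0 := by positivity
        field_simp
      have c3 : (w / (x + w)) * ((1 / (Real.sqrt (2 * Real.pi) * s0)) *
            (Real.exp (2 * w * x / s0 ^ 2) * Real.exp (-(((x + w) / s0) ^ 2) / 2)))
          ≤ 1 * ((1 / (Real.sqrt (2 * Real.pi) * s0)) *
            (Real.exp (2 * w * x / s0 ^ 2) * Real.exp (-(((x + w) / s0) ^ 2) / 2))) :=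
        mul_le_mul_of_nonneg_right ((div_le_one hxw).2 (by linarith)) (by positivity)
      calc _ ≤ _ := c1
        _ = _ := c2
        _ ≤ _ := c3
        _ = _ := by rw [one_mul, expA w s0 x hs0]
    linarith

lemma spikeF_zero (w s0 : ℝ) : spikeF w s0 0 = 0 := by
  show stdNormalCDF ((0 - w) / s0) - Real.exp (2 * w * 0 / s0 ^ 2) * stdNormalCDF (-(0 + w) / s0) = 0
  rw [show (0 - w) / s0 = -(0 + w) / s0 by ring]
  norm_num

lemma tendsto_spikeF_atTop (w s0 : ℝ) (hs0 : 0 < s0) :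
    Tendsto (spikeF w s0) atTop (𝓝 1) := by
  have t1 : Tendsto (fun x : ℝ => stdNormalCDF ((x - w) / s0)) atTop (𝓝 1) := by
    apply tendsto_stdNormalCDF_atTop.comp
    apply Tendsto.atTop_div_const hs0
    simpa [sub_eq_add_neg] using tendsto_atTop_add_const_right atTop (-w) (tendsto_id (α := ℝ))
  have t2 : Tendsto (fun x : ℝ => Real.exp (2 * w * x / s0 ^ 2) * stdNormalCDF (-(x + w) / s0))
      atTop (𝓝 0) := by
    have hb : Tendsto (fun x : ℝ => (1 / Real.sqrt (2 * Real.pi)) * s0 / (x + w)) atTop (𝓝 0) :=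
      Tendsto.div_atTop tendsto_const_nhds
        (tendsto_atTop_add_const_right atTop w (tendsto_id (α := ℝ)))
    apply squeeze_zero'
    · exact Eventually.of_forall fun x =>
        mul_nonneg (Real.exp_nonneg _) (stdNormalCDF_nonneg _)
    · filter_upwards [eventually_ge_atTop (1 - w)] with x hx
      have hxw : 0 < x + w := by linarith
      have htpos : 0 < (x + w) / s0 := div_pos hxw hs0
      have step1 : stdNormalCDF (-(x + w) / s0) ≤ snPDF ((x + w) / s0) / ((x + w) / s0) := by
        rw [neg_div]; exact mills _ htpos
      have c1 : Real.exp (2 * w * x / s0 ^ 2) * stdNormalCDF (-(x + w) / s0)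
          ≤ Real.exp (2 * w * x / s0 ^ 2) * (snPDF ((x + w) / s0) / ((x + w) / s0)) :=
        mul_le_mul_of_nonneg_left step1 (Real.exp_nonneg _)
      have c2 : Real.exp (2 * w * x / s0 ^ 2) * (snPDF ((x + w) / s0) / ((x + w) / s0))
          = (1 / Real.sqrt (2 * Real.pi)) * s0 / (x + w) *
            (Real.exp (2 * w * x / s0 ^ 2) * Real.exp (-(((x + w) / s0) ^ 2) / 2)) := by
        rw [show snPDF ((x + w) / s0) = (1 / Real.sqrt (2 * Real.pi)) *
          Real.exp (-(((x + w) / s0) ^ 2) / 2) from rfl]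
        field_simp
      have c3 : (1 / Real.sqrt (2 * Real.pi)) * s0 / (x + w) *
            (Real.exp (2 * w * x / s0 ^ 2) * Real.exp (-(((x + w) / s0) ^ 2) / 2))
          ≤ (1 / Real.sqrt (2 * Real.pi)) * s0 / (x + w) * 1 := by
        apply mul_le_mul_of_nonneg_left _ (by positivity)
        rw [expA w s0 x hs0]
        exact Real.exp_le_one_iff.2 (div_nonpos_of_nonpos_of_nonneg
          (neg_nonpos.2 (sq_nonneg _)) (by positivity))
      calc _ ≤ _ := c1
        _ = _ := c2
        _ ≤ _ := c3
        _ = _ := mul_one _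
    · exact hb
  have := t1.sub t2
  rw [sub_zero] at this
  exact this

end Aux

open Set Real

/-- `f^{ω,σ₀}` is a probability density (nonnegative, integrating to one, so that
`B(ω,σ₀)` is a probability measure), and `f^{0,1}` is the standard normal density. -/
theorem stmt18 (w s0 : ℝ) (hs0 : 0 < s0) :
    (∀ y : ℝ, 0 ≤ spikeDensity w s0 y) ∧
      (∫ y, spikeDensity w s0 y) = 1 ∧
      IsProbabilityMeasure
        ((volume : Measure ℝ).withDensity fun y => ENNReal.ofReal (spikeDensity w s0 y)) ∧
      ∀ y : ℝ, spikeDensity 0 1 y =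
        (1 / Real.sqrt (2 * Real.pi)) * Real.exp (-(y ^ 2) / 2) := by
  have hnonneg : ∀ y : ℝ, 0 ≤ spikeDensity w s0 y := fun y =>
    spikeAux_nonneg w s0 hs0 |y| (abs_nonneg y)
  have hderiv : ∀ x ∈ Ici (0:ℝ),
      HasDerivAt (spikeF w s0) ((fun x => 2 * spikeAux w s0 x) x) x := fun x _ =>
    hasDerivAt_spikeF w s0 hs0 x
  have hpos : ∀ x ∈ Ioi (0:ℝ), 0 ≤ (fun x => 2 * spikeAux w s0 x) x := fun x hx =>
    mul_nonneg (by norm_num) (spikeAux_nonneg w s0 hs0 x (le_of_lt hx))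
  have hval := integral_Ioi_of_hasDerivAt_of_nonneg' hderiv hpos (tendsto_spikeF_atTop w s0 hs0)
  rw [spikeF_zero, sub_zero] at hval
  have hint2 : IntegrableOn (fun x => 2 * spikeAux w s0 x) (Ioi 0) :=
    integrableOn_Ioi_deriv_of_nonneg' hderiv hpos (tendsto_spikeF_atTop w s0 hs0)
  have hintIoi : IntegrableOn (spikeAux w s0) (Ioi 0) := by
    have h := hint2.const_mul (1/2 : ℝ)
    exact h.congr (Filter.Eventually.of_forall fun x => by ring)
  have hintegral : (∫ y, spikeDensity w s0 y) = 1 := by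
    show (∫ y, spikeAux w s0 |y|) = 1
    rw [integral_comp_abs (f := fun x => spikeAux w s0 x), ← integral_const_mul]
    exact hval
  have hIoi : IntegrableOn (fun y => spikeAux w s0 |y|) (Ioi 0) :=
    hintIoi.congr_fun (fun x hx => by rw [abs_of_pos hx]) measurableSet_Ioi
  have hInt : Integrable (spikeDensity w s0) := by
    have hIic : IntegrableOn (fun y => spikeAux w s0 |y|) (Iic 0) := by
      rw [← Measure.map_neg_eq_self (volume : Measure ℝ)]
      have m : MeasurableEmbedding fun x : ℝ => -x := (Homeomorph.neg ℝ).measurableEmbedding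
      rw [m.integrableOn_map_iff]
      simp_rw [Function.comp_def, abs_neg, neg_preimage, neg_Iic, neg_zero]
      rw [integrableOn_Ici_iff_integrableOn_Ioi]
      exact hIoi
    have h := hIic.union hIoi
    rwa [Iic_union_Ioi, integrableOn_univ] at h
  refine ⟨hnonneg, hintegral, ?_, ?_⟩
  · constructor
    rw [withDensity_apply _ MeasurableSet.univ, Measure.restrict_univ,
      ← ofReal_integral_eq_lintegral_ofReal hInt (Filter.Eventually.of_forall hnonneg),
      hintegral, ENNReal.ofReal_one]
  · intro y
    show spikeAux 0 1 |y| = _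
    unfold spikeAux
    norm_num [sq_abs]
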